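/- Let R be a p-complete commutative ring (discrete) and M a finitely generated abelian group whose torsion subgroup is a p-group. Then the unit map R → R[M]^∧_p induces a bijection between the sets of idempotents of R and of R[M]^∧_p; equivalently, π_0 Spec(R[M]^∧_p) ≅ π_0 Spec(R). -/

import Mathlib

set_option maxHeartbeats 1000000

section Aux

/-- Hausdorff trick: an element of `I` equal to its own cube is zero. -/
lemma aux_haus {R : Type*} [CommRing R] {I : Ideal R} (h : IsHausdorff I R) {d : R}
    (hd : d ∈ I) (h3 : d * d * d = d) : d = 0 := by
  have key : ∀ n : ℕ, d ∈ I ^ n := by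
    intro n
    induction n with
    | zero => simp
    | succ n ih =>
      have h1 : d * d ∈ I ^ n * I := Ideal.mul_mem_mul ih hd
      rw [← pow_succ] at h1
      have h2 : d * d * d ∈ I ^ (n + 1) := Ideal.mul_mem_right _ _ h1
      rwa [h3] at h2
  apply h.haus
  intro n
  rw [SModEq.zero, smul_eq_mul, Ideal.mul_top]
  exact key n

/-- Cube identity for differences of idempotents. -/
lemma aux_cube {R : Type*} [CommRing R] {u v : R} (hu : u * u = u) (hv : v * v = v) :
    (u - v) * (u - v) * (u - v) = u - v := by
  linear_combination (u + 1 - 3*v) * hu - (v + 1 - 3*u) * hv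

/-- Idempotent lifting along an adically complete ring. -/
lemma aux_lift {R : Type*} [CommRing R] {I : Ideal R} (hR : IsAdicComplete I R) (a : R)
    (ha : a * a - a ∈ I) : ∃ e : R, e * e = e ∧ e - a ∈ I := by
  let g : ℕ → R := fun n => Nat.rec a (fun _ x => 3*x^2 - 2*x^3) n
  have hg0 : g 0 = a := rfl
  have hgs : ∀ n, g (n+1) = 3*(g n)^2 - 2*(g n)^3 := fun n => rfl
  have h1 : ∀ n, g n * g n - g n ∈ I ^ (n+1) := by
    intro n
    induction n with
    | zero => rwa [pow_one, hg0]
    | succ n ih =>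
      have hd2 : (g n * g n - g n) * (g n * g n - g n) ∈ I ^ (n+1) * I ^ (n+1) :=
        Ideal.mul_mem_mul ih ih
      have hle : I ^ (n+1) * I ^ (n+1) ≤ I ^ (n+2) := by
        rw [← pow_add]
        exact Ideal.pow_le_pow_right (by omega)
      have hmem : (g n * g n - g n) * (g n * g n - g n) * (4*(g n * g n - g n) - 3)
          ∈ I ^ (n+2) := Ideal.mul_mem_right _ _ (hle hd2)
      have hid : g (n+1) * g (n+1) - g (n+1)
          = (g n * g n - g n) * (g n * g n - g n) * (4*(g n * g n - g n) - 3) := by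
        rw [hgs]; ring
      rwa [hid]
  have h2 : ∀ n, g (n+1) - g n ∈ I ^ (n+1) := by
    intro n
    have hid : g (n+1) - g n = -(2 * g n - 1) * (g n * g n - g n) := by rw [hgs]; ring
    rw [hid]
    exact Ideal.mul_mem_left _ _ (h1 n)
  have h3 : ∀ {m n}, m ≤ n → g m ≡ g n [SMOD (I ^ m • ⊤ : Ideal R)] := by
    intro m n hmn
    rw [SModEq.sub_mem, smul_eq_mul, Ideal.mul_top]
    have : ∀ k, g (m + k) - g m ∈ I ^ m := by
      intro k
      induction k with
      | zero => simp
      | succ k ih =>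
        have : g (m+k+1) - g m = (g (m+k+1) - g (m+k)) + (g (m+k) - g m) := by ring
        rw [show m + (k+1) = m + k + 1 from rfl, this]
        refine Submodule.add_mem _ (Ideal.pow_le_pow_right ?_ (h2 (m+k))) ih
        omega
    have hd := this (n - m)
    rw [Nat.add_sub_cancel' hmn] at hd
    simpa using neg_mem hd
  obtain ⟨L, hL⟩ := hR.toIsPrecomplete.prec h3
  have hLn : ∀ n, g n - L ∈ I ^ n := by
    intro n
    have := hL n
    rwa [SModEq.sub_mem, smul_eq_mul, Ideal.mul_top] at this
  refine ⟨L, ?_, ?_⟩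
  · have key : ∀ n : ℕ, L * L - L ∈ I ^ n := by
      intro n
      have e1 : L * L - L = (L - g n) * (L + g n) + (g n * g n - g n) + (g n - L) := by ring
      rw [e1]
      refine Submodule.add_mem _ (Submodule.add_mem _ ?_ ?_) ?_
      · exact Ideal.mul_mem_right _ _ (by simpa using neg_mem (hLn n))
      · exact Ideal.pow_le_pow_right (by omega) (h1 n)
      · exact hLn n
    have := IsHausdorff.haus hR.toIsHausdorff (L * L - L) (fun n => by
      rw [SModEq.zero, smul_eq_mul, Ideal.mul_top]; exact key n)
    exact sub_eq_zero.mp this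
  · have e1 : L - a = -(g 1 - L) + (g 1 - g 0) := by rw [hg0]; ring
    rw [e1]
    refine Submodule.add_mem _ (neg_mem ?_) ?_
    · simpa using hLn 1
    · simpa using h2 0

/-- Support combinatorics: a finite set stable under division by `p` consists of `0`,
provided all torsion is `p`-power torsion. -/
lemma aux_supp {p : ℕ} (hp : p.Prime) {M : Type*} [AddCommGroup M]
    (htor : ∀ m : M, (∃ k : ℕ, k ≠ 0 ∧ k • m = 0) → ∃ n : ℕ, p ^ n • m = 0)
    (T : Finset M) (hT : ∀ m ∈ T, ∃ m' ∈ T, m = p • m') : ∀ m ∈ T, m = 0 := by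
  intro m hm
  choose g hg1 hg2 using hT
  let seq : ℕ → {x // x ∈ T} := fun n =>
    Nat.rec ⟨m, hm⟩ (fun _ x => ⟨g x.1 x.2, hg1 x.1 x.2⟩) n
  have hseq : ∀ n, (seq n).1 = p • (seq (n+1)).1 := fun n => hg2 _ _
  have key : ∀ n k, (seq n).1 = p ^ k • (seq (n+k)).1 := by
    intro n k
    induction k with
    | zero => simp
    | succ k ih =>
      rw [ih, hseq (n+k), smul_smul, ← pow_succ]
      rfl
  obtain ⟨i, j, hne, hij⟩ : ∃ i j, i ≠ j ∧ seq i = seq j := by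
    have := Finite.exists_ne_map_eq_of_infinite seq
    obtain ⟨i, j, h1, h2⟩ := this
    exact ⟨i, j, h1, h2⟩
  wlog hlt : i < j generalizing i j
  · exact this j i hne.symm hij.symm (by omega)
  set d := j - i with hd
  have hdpos : 0 < d := by omega
  set x := (seq i).1 with hx
  have hcyc : x = p ^ d • x := by
    have := key i d
    rw [show i + d = j by omega, ← hij] at this
    exact this
  have htors : (p ^ d - 1) • x = 0 := by
    have h2 : (p ^ d - 1 + 1) • x = (p ^ d - 1) • x + x := by
      rw [add_nsmul, one_nsmul]
    rw [Nat.sub_add_cancel (Nat.one_le_iff_ne_zero.mpr (pow_ne_zero d hp.pos.ne'))] at h2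
    have : x = (p ^ d - 1) • x + x := by rw [← h2, ← hcyc]
    exact (right_eq_add.mp this)
  have hne0 : p ^ d - 1 ≠ 0 := by
    have : 2 ≤ p ^ d := by
      calc 2 ≤ p := hp.two_le
      _ = p ^ 1 := (pow_one p).symm
      _ ≤ p ^ d := Nat.pow_le_pow_right hp.pos hdpos
    omega
  obtain ⟨N, hN⟩ := htor x ⟨p ^ d - 1, hne0, htors⟩
  have hiter : ∀ t : ℕ, p ^ (d * t) • x = x := by
    intro t
    induction t with
    | zero => simp
    | succ t ih =>
      rw [show d * (t+1) = d * t + d by ring, pow_add, mul_smul, ← hcyc, ih]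
  have hx0 : x = 0 := by
    have hNle : N ≤ d * N := Nat.le_mul_of_pos_left N hdpos
    have h4 : p ^ (d * N) • x = 0 := by
      rw [show d * N = (d * N - N) + N by omega, pow_add, mul_smul, hN, smul_zero]
    calc x = p ^ (d * N) • x := (hiter N).symm
      _ = 0 := h4
  have : m = p ^ i • x := by
    have := key 0 i
    simp only [zero_add] at this
    exact this
  rw [this, hx0, smul_zero]

open AddMonoidAlgebra in
/-- Idempotents in a group algebra over a ring of characteristic `p` are concentrated
in degree `0`, when all torsion of the group is `p`-power torsion. -/
lemma aux_single {p : ℕ} (hp : p.Prime) {S : Type*} [CommRing S] (hpS : (p : S) = 0)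
    {M : Type*} [AddCommGroup M]
    (htor : ∀ m : M, (∃ k : ℕ, k ≠ 0 ∧ k • m = 0) → ∃ n : ℕ, p ^ n • m = 0)
    (x : AddMonoidAlgebra S M) (hx : x * x = x) :
    x = AddMonoidAlgebra.single 0 (x.coeff 0) := by
  rcases subsingleton_or_nontrivial S with h | h
  · exact AddMonoidAlgebra.ext (Finsupp.ext fun a => Subsingleton.elim _ _)
  · haveI : Nontrivial (AddMonoidAlgebra S M) := AddMonoidAlgebra.instNontrivial
    have hpA : ((p : ℕ) : AddMonoidAlgebra S M) = 0 := by
      rw [← map_natCast (AddMonoidAlgebra.singleZeroRingHom (R := S) (M := M)) p, hpS]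
      simp [AddMonoidAlgebra.singleZeroRingHom]
    haveI : CharP (AddMonoidAlgebra S M) p := (CharP.charP_iff_prime_eq_zero hp).mpr hpA
    haveI : ExpChar (AddMonoidAlgebra S M) p := ExpChar.prime hp
    have hxp : x ^ p = x := by
      have hxi : IsIdempotentElem x := hx
      have := hxi.pow_succ_eq (p - 1)
      rwa [Nat.sub_add_cancel hp.one_lt.le] at this
    have hsum : (∑ m ∈ x.coeff.support, AddMonoidAlgebra.single m (x.coeff m)) = x :=
      AddMonoidAlgebra.sum_coeff_single x
    have hrw : x = ∑ m ∈ x.coeff.support, AddMonoidAlgebra.single (p • m) (x.coeff m ^ p) := by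
      calc x = x ^ p := hxp.symm
        _ = (∑ m ∈ x.coeff.support, AddMonoidAlgebra.single m (x.coeff m)) ^ p := by rw [hsum]
        _ = ∑ m ∈ x.coeff.support, (AddMonoidAlgebra.single m (x.coeff m)) ^ p := sum_pow_char _ _ _
        _ = ∑ m ∈ x.coeff.support, AddMonoidAlgebra.single (p • m) (x.coeff m ^ p) :=
          Finset.sum_congr rfl fun m _ => AddMonoidAlgebra.single_pow _ _ p
    have hsupp : ∀ m ∈ x.coeff.support, ∃ m' ∈ x.coeff.support, m = p • m' := by
      intro m hm
      have hss := congrArg (fun z : AddMonoidAlgebra S M => z.coeff.support) hrw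
      rw [hss, AddMonoidAlgebra.coeff_sum] at hm
      obtain ⟨i, hi, hmem⟩ := Finsupp.mem_support_finset_sum
        (h := fun m => Finsupp.single (p • m) (x.coeff m ^ p)) m hm
      have := Finsupp.support_single_subset hmem
      exact ⟨i, hi, (Finset.mem_singleton.mp this)⟩
    have hz := aux_supp hp htor x.coeff.support hsupp
    have : x.coeff.support ⊆ {0} := fun m hm => Finset.mem_singleton.mpr (hz m hm)
    exact AddMonoidAlgebra.coeff_injective (Finsupp.support_subset_singleton.mp this)

open AddMonoidAlgebra in
/-- Coefficientwise base change of an `AddMonoidAlgebra`. -/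
noncomputable def auxMap {R S : Type*} [CommRing R] [CommRing S] (g : R →+* S)
    (M : Type*) [AddCommMonoid M] : AddMonoidAlgebra R M →+* AddMonoidAlgebra S M :=
  liftNCRingHom (singleZeroRingHom.comp g) (of S M) fun _ _ => Commute.all _ _

lemma auxMap_single {R S : Type*} [CommRing R] [CommRing S] (g : R →+* S)
    {M : Type*} [AddCommMonoid M] (m : M) (a : R) :
    auxMap g M (AddMonoidAlgebra.single m a) = AddMonoidAlgebra.single m (g a) := by
  simp [auxMap, AddMonoidAlgebra.liftNCRingHom, AddMonoidAlgebra.single_mul_single]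

lemma auxMap_apply {R S : Type*} [CommRing R] [CommRing S] (g : R →+* S)
    {M : Type*} [AddCommMonoid M] (w : AddMonoidAlgebra R M) (m : M) :
    (auxMap g M w).coeff m = g (w.coeff m) := by
  induction w using AddMonoidAlgebra.induction_linear with
  | zero => simp
  | add u v hu hv =>
    rw [map_add]
    show (auxMap g M u).coeff m + (auxMap g M v).coeff m = _
    rw [hu, hv, AddMonoidAlgebra.coeff_add, Finsupp.add_apply, map_add]
  | single a b =>
    rw [auxMap_single]
    show Finsupp.single a (g b) m = g (Finsupp.single a b m)
    classical
    rw [Finsupp.single_apply, Finsupp.single_apply, apply_ite g, map_zero]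

end Aux

/-- Let `R` be a p-complete (discrete) commutative ring and `M` a finitely generated
abelian group whose torsion subgroup is a p-group.  Let `B` (with map
`f : R[M] → B`) be the p-adic completion of the group ring.  Then the unit map
`R → B` induces a bijection on idempotents; equivalently,
`π₀ Spec(R[M]^∧_p) ≅ π₀ Spec R`. -/
theorem idempotents_of_completed_groupRing {p : ℕ} (hp : p.Prime)
    {R : Type*} [CommRing R] (hR : IsAdicComplete (Ideal.span {(p : R)}) R)
    (M : Type*) [AddCommGroup M] (hfg : AddGroup.FG M)
    (htor : ∀ m : M, (∃ k : ℕ, k ≠ 0 ∧ k • m = 0) → ∃ n : ℕ, p ^ n • m = 0)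
    (B : Type*) [CommRing B] (f : AddMonoidAlgebra R M →+* B)
    (hB : IsAdicComplete (Ideal.span {(p : B)}) B)
    (hcompl : ∀ (n : ℕ)
      (H : Ideal.span {((p : ℕ) : AddMonoidAlgebra R M)} ^ n ≤
        (Ideal.span {(p : B)} ^ n).comap f),
      Function.Bijective (Ideal.quotientMap (Ideal.span {(p : B)} ^ n) f H)) :
    ∀ b : B, IsIdempotentElem b →
      ∃! e : R, IsIdempotentElem e ∧ f (AddMonoidAlgebra.single 0 e) = b := by
  classical
  intro b hb
  have hfp : f ((p : ℕ) : AddMonoidAlgebra R M) = (p : B) := map_natCast f p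
  have hpc : ((p : ℕ) : AddMonoidAlgebra R M) = AddMonoidAlgebra.single 0 ((p : ℕ) : R) :=
    (map_natCast (AddMonoidAlgebra.singleZeroRingHom (R := R) (M := M)) p).symm
  -- the comparison hypothesis
  have H : ∀ n : ℕ, Ideal.span {((p : ℕ) : AddMonoidAlgebra R M)} ^ n ≤
      (Ideal.span {(p : B)} ^ n).comap f := by
    intro n
    rw [Ideal.span_singleton_pow, Ideal.span_singleton_pow, Ideal.span_le]
    intro y hy
    rw [Set.mem_singleton_iff] at hy
    subst hy
    rw [SetLike.mem_coe, Ideal.mem_comap, map_pow, hfp]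
    exact Ideal.subset_span rfl
  have hbij := hcompl 1 (H 1)
  -- the quotient ring S = R/p
  set I : Ideal R := Ideal.span {(p : R)} with hI
  let S := R ⧸ I
  let π0 : R →+* S := Ideal.Quotient.mk I
  have hpS : ((p : ℕ) : S) = 0 := by
    rw [← map_natCast π0 p]
    exact Ideal.Quotient.eq_zero_iff_mem.mpr (Ideal.subset_span rfl)
  -- existence: pull back b mod p
  obtain ⟨xb, hxb⟩ := hbij.2 (Ideal.Quotient.mk _ b)
  obtain ⟨x, rfl⟩ := Ideal.Quotient.mk_surjective xb
  rw [Ideal.quotientMap_mk] at hxb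
  -- x is idempotent mod p
  have hxx : x * x - x ∈ Ideal.span {((p : ℕ) : AddMonoidAlgebra R M)} := by
    have h1 : Ideal.quotientMap (Ideal.span {(p : B)} ^ 1) f (H 1)
        (Ideal.Quotient.mk _ (x * x)) = Ideal.quotientMap (Ideal.span {(p : B)} ^ 1) f (H 1)
        (Ideal.Quotient.mk _ x) := by
      rw [Ideal.quotientMap_mk, Ideal.quotientMap_mk, map_mul, map_mul, hxb, ← map_mul, hb.eq]
    have h2 := hbij.1 h1
    have h3 := Ideal.Quotient.eq.mp h2
    rwa [pow_one] at h3
  -- push x to S[M]; it is an idempotent there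
  set y : AddMonoidAlgebra S M := auxMap π0 M x with hy_def
  have hpSM : ((p : ℕ) : AddMonoidAlgebra S M) = 0 := by
    rw [← map_natCast (AddMonoidAlgebra.singleZeroRingHom (R := S) (M := M)) p, hpS]
    simp [AddMonoidAlgebra.singleZeroRingHom]
  have hy : y * y = y := by
    obtain ⟨z, hz⟩ := Ideal.mem_span_singleton'.mp hxx
    have h1 : auxMap π0 M (x * x - x) = 0 := by
      rw [← hz, map_mul, map_natCast (auxMap π0 M) p, hpSM, mul_zero]
    rw [map_sub, map_mul, ← hy_def, sub_eq_zero] at h1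
    exact h1
  have hsy := aux_single hp hpS htor y hy
  set s : S := y.coeff 0 with hs_def
  -- s is idempotent
  have hss : s * s = s := by
    have h2 : AddMonoidAlgebra.single (0 : M) (s * s) = AddMonoidAlgebra.single (0 : M) s := by
      calc AddMonoidAlgebra.single (0 : M) (s * s)
          = AddMonoidAlgebra.single (0 : M) s * AddMonoidAlgebra.single (0 : M) s := by
            rw [AddMonoidAlgebra.single_mul_single, zero_add]
        _ = y * y := by rw [← hsy]
        _ = y := hy
        _ = AddMonoidAlgebra.single (0 : M) s := hsy
    exact AddMonoidAlgebra.single_right_injective h2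
  -- lift s to an idempotent e of R
  obtain ⟨a, ha⟩ := Ideal.Quotient.mk_surjective s
  have haa : a * a - a ∈ I := by
    have : π0 (a * a - a) = 0 := by
      rw [map_sub, map_mul]
      show (Ideal.Quotient.mk I a) * _ - _ = 0
      rw [ha, hss, sub_self]
    exact Ideal.Quotient.eq_zero_iff_mem.mp this
  obtain ⟨e, hee, hea⟩ := aux_lift hR a haa
  have hπ0e : π0 e = s := by
    have h1 : π0 (e - a) = 0 := Ideal.Quotient.eq_zero_iff_mem.mpr hea
    rw [map_sub, sub_eq_zero] at h1
    rw [h1]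
    exact ha
  -- single 0 e agrees with x modulo p
  have hw : AddMonoidAlgebra.single (0 : M) e - x ∈
      Ideal.span {((p : ℕ) : AddMonoidAlgebra R M)} := by
    have hc : ∀ m : M, (AddMonoidAlgebra.single (0 : M) e - x).coeff m ∈ I := by
      intro m
      have h1 : auxMap π0 M (AddMonoidAlgebra.single (0 : M) e - x) = 0 := by
        rw [map_sub, auxMap_single, hπ0e, ← hy_def, ← hsy, sub_self]
      have h2 := auxMap_apply π0 (AddMonoidAlgebra.single (0 : M) e - x) m
      rw [h1] at h2
      have h3 : π0 ((AddMonoidAlgebra.single (0 : M) e - x).coeff m) = 0 := by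
        rw [← h2]; rfl
      exact Ideal.Quotient.eq_zero_iff_mem.mp h3
    set w : AddMonoidAlgebra R M := AddMonoidAlgebra.single (0 : M) e - x with hw_def
    have hw2 : w = ∑ m ∈ w.coeff.support, AddMonoidAlgebra.single m (w.coeff m) :=
      (AddMonoidAlgebra.sum_coeff_single w).symm
    rw [hw2]
    apply Ideal.sum_mem
    intro m _
    obtain ⟨c, hc'⟩ := Ideal.mem_span_singleton'.mp (hc m)
    have h4 : AddMonoidAlgebra.single m (w.coeff m)
        = ((p : ℕ) : AddMonoidAlgebra R M) * AddMonoidAlgebra.single m c := by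
      rw [hpc, AddMonoidAlgebra.single_mul_single, zero_add, ← hc', mul_comm]
    rw [h4]
    exact Ideal.mul_mem_right _ _ (Ideal.subset_span rfl)
  -- conclude f (single 0 e) = b
  have hδ1 : f (AddMonoidAlgebra.single (0 : M) e) - f x ∈ Ideal.span {(p : B)} := by
    obtain ⟨z, hz⟩ := Ideal.mem_span_singleton'.mp hw
    refine Ideal.mem_span_singleton'.mpr ⟨f z, ?_⟩
    rw [← hfp, ← map_mul, hz, map_sub]
  have hδ2 : f x - b ∈ Ideal.span {(p : B)} := by
    have := Ideal.Quotient.eq.mp hxb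
    rwa [pow_one] at this
  have hδ : f (AddMonoidAlgebra.single (0 : M) e) - b ∈ Ideal.span {(p : B)} := by
    have := Submodule.add_mem _ hδ1 hδ2
    rwa [sub_add_sub_cancel] at this
  have hu : f (AddMonoidAlgebra.single (0 : M) e) * f (AddMonoidAlgebra.single (0 : M) e)
      = f (AddMonoidAlgebra.single (0 : M) e) := by
    rw [← map_mul, AddMonoidAlgebra.single_mul_single, zero_add, hee]
  have hfeb : f (AddMonoidAlgebra.single (0 : M) e) = b :=
    sub_eq_zero.mp (aux_haus hB.toIsHausdorff hδ (aux_cube hu hb.eq))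
  refine ⟨e, ⟨hee, hfeb⟩, ?_⟩
  -- uniqueness
  rintro e' ⟨he', hfe'⟩
  have hw0 : AddMonoidAlgebra.single (0 : M) e' - AddMonoidAlgebra.single (0 : M) e ∈
      Ideal.span {((p : ℕ) : AddMonoidAlgebra R M)} := by
    have h1 : Ideal.quotientMap (Ideal.span {(p : B)} ^ 1) f (H 1)
        (Ideal.Quotient.mk _ (AddMonoidAlgebra.single (0 : M) e'))
        = Ideal.quotientMap (Ideal.span {(p : B)} ^ 1) f (H 1)
        (Ideal.Quotient.mk _ (AddMonoidAlgebra.single (0 : M) e)) := by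
      rw [Ideal.quotientMap_mk, Ideal.quotientMap_mk, hfe', hfeb]
    have h2 := Ideal.Quotient.eq.mp (hbij.1 h1)
    rwa [pow_one] at h2
  obtain ⟨z, hz⟩ := Ideal.mem_span_singleton'.mp hw0
  have hco : e' - e ∈ I := by
    refine Ideal.mem_span_singleton'.mpr ⟨z.coeff 0, ?_⟩
    have h2 := congrArg (fun w : AddMonoidAlgebra R M => w.coeff 0) hz
    rw [hpc] at h2
    rw [AddMonoidAlgebra.coeff_mul_single_zero] at h2
    rw [h2, AddMonoidAlgebra.coeff_sub, Finsupp.sub_apply, AddMonoidAlgebra.coeff_single,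
      AddMonoidAlgebra.coeff_single, Finsupp.single_eq_same, Finsupp.single_eq_same]
  exact sub_eq_zero.mp (aux_haus hR.toIsHausdorff hco (aux_cube he'.eq hee))
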